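/- arXiv:2304.09086 — 3 statements merged into one kernel-verified Lean document; each statement's English description precedes it below -/
import Mathlib

section
/- Let σ > 0, β < 0, ω > 0, q(ω) = (2^{2σ+1}ω^{σ+1/2}/(-β))^{1/(2σ)}, and u_ω = q(ω)·G_ω with G_ω(x) = e^{-√ω|x|}/(2√ω). Then the mass M(ω) = ‖u_ω‖²_{L²(ℝ)} = q(ω)²/(4ω^{3/2}) is: (i) strictly increasing in ω if σ < 1, (ii) strictly decreasing in ω if σ > 1, and (iii) constant equal to -2/β if σ = 1. -/
open Real Set

/-- Monotonicity of the mass `M(ω) = q(ω)²/(4ω^{3/2})` of the 1D bound state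
`u_ω = q(ω) G_ω`: increasing for `σ < 1`, decreasing for `σ > 1`, and constantly
equal to the critical mass `-2/β` for `σ = 1`. -/
theorem bound_state_mass_1d (σ β : ℝ) (hσ : 0 < σ) (hβ : β < 0)
    (q M : ℝ → ℝ)
    (hq : ∀ ω, q ω = ((2 : ℝ) ^ (2 * σ + 1) * ω ^ (σ + 1 / 2) / (-β)) ^ (1 / (2 * σ)))
    (hM : ∀ ω, M ω = (q ω) ^ 2 / (4 * ω ^ ((3 : ℝ) / 2))) :
    (σ < 1 → StrictMonoOn M (Ioi 0)) ∧
    (1 < σ → StrictAntiOn M (Ioi 0)) ∧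
    (σ = 1 → ∀ ω : ℝ, 0 < ω → M ω = -2 / β) := by
  have hβ' : (0:ℝ) < -β := by linarith
  set K : ℝ := ((2 : ℝ) ^ (2 * σ + 1) / (-β)) ^ σ⁻¹ / 4 with hK
  have hKpos : 0 < K := by
    apply div_pos _ (by norm_num)
    exact Real.rpow_pos_of_pos (div_pos (Real.rpow_pos_of_pos (by norm_num) _) hβ') _
  have key : ∀ ω : ℝ, 0 < ω → M ω = K * ω ^ ((1 - σ) / (2 * σ)) := by
    intro ω hω
    have h2 : (0:ℝ) < (2:ℝ) ^ (2*σ+1) := Real.rpow_pos_of_pos (by norm_num) _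
    have hωp : (0:ℝ) < ω ^ (σ + 1/2) := Real.rpow_pos_of_pos hω _
    rw [hM, hq]
    have hA : (2 : ℝ) ^ (2 * σ + 1) * ω ^ (σ + 1 / 2) / (-β)
        = ((2 : ℝ) ^ (2 * σ + 1) / (-β)) * ω ^ (σ + 1 / 2) := by ring
    rw [hA]
    have hB : (0:ℝ) ≤ (2 : ℝ) ^ (2 * σ + 1) / (-β) := le_of_lt (div_pos h2 hβ')
    rw [← Real.rpow_natCast (_ ^ (1 / (2*σ))) 2, ← Real.rpow_mul (by positivity)]
    have he : 1 / (2 * σ) * (2:ℕ) = σ⁻¹ := by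
      push_cast; field_simp
    rw [he, Real.mul_rpow hB hωp.le, ← Real.rpow_mul hω.le]
    rw [show ((σ + 1/2) * σ⁻¹ : ℝ) = 3/2 + (1 - σ) / (2 * σ) by field_simp; ring,
      Real.rpow_add hω, hK]
    have h32 : ω ^ ((3:ℝ)/2) ≠ 0 := (Real.rpow_pos_of_pos hω _).ne'
    field_simp
  refine ⟨?_, ?_, ?_⟩
  · intro hσ1 x hx y hy hxy
    rw [key x hx, key y hy]
    have he : 0 < (1 - σ) / (2 * σ) := div_pos (by linarith) (by linarith)
    exact mul_lt_mul_of_pos_left (Real.rpow_lt_rpow hx.le hxy he) hKpos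
  · intro hσ1 x hx y hy hxy
    rw [key x hx, key y hy]
    have he : (1 - σ) / (2 * σ) < 0 := div_neg_of_neg_of_pos (by linarith) (by linarith)
    exact mul_lt_mul_of_pos_left (Real.rpow_lt_rpow_of_neg hx hxy he) hKpos
  · intro hσ1 ω hω
    rw [key ω hω, hσ1]
    norm_num [hK, hσ1]
    field_simp
    ring
end

section
/- Let σ > 0, β < 0, ω > 0. Define q(ω) = (√ω/(-4πβ))^{1/(2σ)} and u_ω(x) = q(ω)·e^{-√ω‖x‖}/(4π‖x‖) on ℝ³. Then the mass M(ω) = ‖u_ω‖²_{L²(ℝ³)} = q(ω)²/(8π√ω) satisfies: M is strictly increasing in ω when σ < 1, strictly decreasing when σ > 1, and constant equal to 1/(-32π²β) when σ = 1. -/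
open Real Set

/-- Monotonicity of the mass `M(ω) = q(ω)²/(8π√ω)` of the 3D bound state
`u_ω = q(ω) G_ω`, `q(ω) = (√ω/(-4πβ))^{1/(2σ)}`: increasing for `σ < 1`,
decreasing for `σ > 1`, and constantly equal to `1/(-32π²β)` for `σ = 1`. -/
theorem bound_state_mass_3d (σ β : ℝ) (hσ : 0 < σ) (hβ : β < 0)
    (q M : ℝ → ℝ)
    (hq : ∀ ω, q ω = (Real.sqrt ω / (-4 * Real.pi * β)) ^ (1 / (2 * σ)))
    (hM : ∀ ω, M ω = (q ω) ^ 2 / (8 * Real.pi * Real.sqrt ω)) :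
    (σ < 1 → StrictMonoOn M (Ioi 0)) ∧
    (1 < σ → StrictAntiOn M (Ioi 0)) ∧
    (σ = 1 → ∀ ω : ℝ, 0 < ω → M ω = 1 / (-32 * Real.pi ^ 2 * β)) := by
  set c : ℝ := -4 * Real.pi * β with hc_def
  have hc : 0 < c := by
    have := Real.pi_pos
    rw [hc_def]
    nlinarith
  set K : ℝ := 1 / (8 * Real.pi * c ^ (1 / σ)) with hK_def
  set r : ℝ := 1 / (2 * σ) - 1 / 2 with hr_def
  have hK : 0 < K := by
    have hπ := Real.pi_pos
    have : 0 < c ^ (1 / σ) := Real.rpow_pos_of_pos hc _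
    positivity
  have hMK : ∀ ω : ℝ, 0 < ω → M ω = K * ω ^ r := by
    intro ω hω
    have hsω : 0 < Real.sqrt ω := Real.sqrt_pos.mpr hω
    have h1 : (q ω) ^ 2 = (Real.sqrt ω / c) ^ (1 / σ) := by
      rw [hq, ← Real.rpow_natCast _ 2, ← Real.rpow_mul (by positivity)]
      congr 1
      push_cast
      field_simp
    have h2 : (Real.sqrt ω / c) ^ (1 / σ) = ω ^ (1 / (2 * σ)) / c ^ (1 / σ) := by
      rw [Real.div_rpow hsω.le hc.le, Real.sqrt_eq_rpow,
        ← Real.rpow_mul hω.le]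
      congr 2
      field_simp
    rw [hM, h1, h2, Real.sqrt_eq_rpow]
    rw [hr_def, Real.rpow_sub hω, hK_def]
    have h3 : (0:ℝ) < ω ^ (1/2 : ℝ) := Real.rpow_pos_of_pos hω _
    have h4 : (0:ℝ) < c ^ (1 / σ) := Real.rpow_pos_of_pos hc _
    have h5 : (0:ℝ) < ω ^ (1/(2*σ) : ℝ) := Real.rpow_pos_of_pos hω _
    have hπ := Real.pi_pos
    field_simp
  refine ⟨?_, ?_, ?_⟩
  · intro hσ1 x hx y hy hxy
    have hr : 0 < r := by
      rw [hr_def]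
      rw [sub_pos, div_lt_div_iff₀ (by norm_num) (by positivity)]
      nlinarith
    rw [hMK x hx, hMK y hy]
    exact mul_lt_mul_of_pos_left (Real.rpow_lt_rpow (le_of_lt hx) hxy hr) hK
  · intro hσ1 x hx y hy hxy
    have hr : r < 0 := by
      rw [hr_def]
      rw [sub_neg, div_lt_div_iff₀ (by positivity) (by norm_num)]
      nlinarith
    rw [hMK x hx, hMK y hy]
    exact mul_lt_mul_of_pos_left (Real.rpow_lt_rpow_of_neg hx hxy hr) hK
  · intro hσ1 ω hω
    have hr : r = 0 := by rw [hr_def, hσ1]; norm_num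
    rw [hMK ω hω, hr, Real.rpow_zero, mul_one, hK_def, hσ1]
    rw [one_div_one, Real.rpow_one, hc_def]
    have hπ := Real.pi_pos
    rw [div_eq_div_iff (by nlinarith) (by nlinarith)]
    ring
end

section
/- Fix β < 0 and σ > 0, and define on (4e^{-2γ}, ∞) the 2D bound-state mass M(ω) = q(ω)²·‖G_ω‖²_{L²(ℝ²)} where q(ω) = ((log(√ω/2)+γ)/(-2πβ))^{1/(2σ)} and ‖G_ω‖²_{L²(ℝ²)} = 1/(4πω). Then M is strictly increasing on (4e^{-2γ}, 4e^{-2γ+1/σ}], strictly decreasing on [4e^{-2γ+1/σ}, ∞), and M(ω) → 0 both as ω → 4e^{-2γ} from above and as ω → ∞. -/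
open Real Set Filter

/-- Qualitative behavior of the 2D bound-state mass
`M(ω) = q(ω)²/(4πω)`, `q(ω) = ((log(√ω/2)+γ)/(-2πβ))^{1/(2σ)}`, for `β < 0`:
strictly increasing on `(4e^{-2γ}, 4e^{-2γ+1/σ}]`, strictly decreasing on
`[4e^{-2γ+1/σ}, ∞)`, and vanishing in the limits `ω → 4e^{-2γ}` and `ω → ∞`. -/
theorem bound_state_mass_2d (σ β : ℝ) (hσ : 0 < σ) (hβ : β < 0)
    (q M : ℝ → ℝ)
    (hq : ∀ ω, q ω = ((Real.log (Real.sqrt ω / 2) + Real.eulerMascheroniConstant)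
                        / (-2 * Real.pi * β)) ^ (1 / (2 * σ)))
    (hM : ∀ ω, M ω = (q ω) ^ 2 / (4 * Real.pi * ω)) :
    StrictMonoOn M
      (Ioc (4 * Real.exp (-2 * Real.eulerMascheroniConstant))
           (4 * Real.exp (-2 * Real.eulerMascheroniConstant + 1 / σ))) ∧
    StrictAntiOn M
      (Ici (4 * Real.exp (-2 * Real.eulerMascheroniConstant + 1 / σ))) ∧
    Tendsto M
      (nhdsWithin (4 * Real.exp (-2 * Real.eulerMascheroniConstant))
        (Ioi (4 * Real.exp (-2 * Real.eulerMascheroniConstant)))) (nhds 0) ∧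
    Tendsto M atTop (nhds 0) := by
  set γ := Real.eulerMascheroniConstant with hγdef
  set c : ℝ := -2 * Real.pi * β with hcdef
  have hc : 0 < c := by
    rw [hcdef]; nlinarith [Real.pi_pos]
  set A : ℝ := 4 * Real.exp (-2 * γ) with hAdef
  set B : ℝ := 4 * Real.exp (-2 * γ + 1 / σ) with hBdef
  have hA : 0 < A := by positivity
  have hB : 0 < B := by positivity
  have hAB : A < B := by
    have : Real.exp (-2*γ) < Real.exp (-2*γ + 1/σ) := by
      apply Real.exp_lt_exp.2; have : 0 < 1/σ := by positivity
      linarith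
    rw [hAdef, hBdef]; linarith
  set u : ℝ → ℝ := fun ω => Real.log ω / 2 - Real.log 2 + γ with hudef
  have hlog4 : Real.log 4 = 2 * Real.log 2 := by
    rw [show (4:ℝ) = 2^2 by norm_num, Real.log_pow]; push_cast; ring
  have hlogA : Real.log A = 2 * Real.log 2 - 2 * γ := by
    rw [hAdef, Real.log_mul (by norm_num) (Real.exp_ne_zero _), Real.log_exp, hlog4]; ring
  have hlogB : Real.log B = 2 * Real.log 2 - 2 * γ + 1 / σ := by
    rw [hBdef, Real.log_mul (by norm_num) (Real.exp_ne_zero _), Real.log_exp, hlog4]; ring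
  have huA : u A = 0 := by rw [hudef]; simp only; rw [hlogA]; ring
  have huB : u B = 1 / (2*σ) := by rw [hudef]; simp only; rw [hlogB]; ring
  have humono : ∀ a b : ℝ, 0 < a → a < b → u a < u b := by
    intro a b ha hab
    have := Real.log_lt_log ha hab
    simp only [hudef]; linarith
  set N : ℝ → ℝ := fun ω => (u ω / c) ^ ((1:ℝ)/σ) / (4*Real.pi*ω) with hNdef
  -- M = N for ω > A
  have hMN : ∀ ω, A < ω → M ω = N ω := by
    intro ω hω
    have hω0 : 0 < ω := lt_trans hA hω
    have hu0 : 0 < u ω := huA ▸ humono A ω hA hω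
    have hbase : Real.log (Real.sqrt ω / 2) + γ = u ω := by
      rw [Real.log_div (by positivity) (by norm_num), Real.log_sqrt hω0.le, hudef]
    have hxnn : (0:ℝ) ≤ u ω / c := by positivity
    rw [hM, hq, hbase, hNdef]
    congr 1
    rw [← Real.rpow_natCast ((u ω / c) ^ (1/(2*σ))) 2, ← Real.rpow_mul hxnn]
    congr 1
    field_simp
    norm_num
  -- derivative of N
  have hderiv : ∀ ω, A < ω → HasDerivAt N
      (((u ω / c) ^ ((1:ℝ)/σ - 1) * (4 * Real.pi / c) * (1/(2*σ) - u ω)) / (4*Real.pi*ω)^2) ω := by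
    intro ω hω
    have hω0 : 0 < ω := lt_trans hA hω
    have hu0 : 0 < u ω := huA ▸ humono A ω hA hω
    have hx0 : 0 < u ω / c := by positivity
    have hlog : HasDerivAt Real.log ω⁻¹ ω := Real.hasDerivAt_log hω0.ne'
    have hu' : HasDerivAt u (ω⁻¹ / 2) ω := by
      exact ((hlog.div_const 2).sub_const _).add_const _
    have hx' : HasDerivAt (fun ω => u ω / c) (ω⁻¹ / 2 / c) ω := hu'.div_const c
    have hf : HasDerivAt (fun ω => (u ω / c) ^ ((1:ℝ)/σ))
        (ω⁻¹ / 2 / c * ((1:ℝ)/σ) * (u ω / c) ^ ((1:ℝ)/σ - 1)) ω :=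
      hx'.rpow_const (Or.inl hx0.ne')
    have hg : HasDerivAt (fun ω : ℝ => 4*Real.pi*ω) (4*Real.pi) ω := by
      simpa using (hasDerivAt_id ω).const_mul (4*Real.pi)
    have hdiv := hf.div hg (by positivity)
    refine hdiv.congr_deriv ?_
    symm
    have hsplit : (u ω / c) ^ ((1:ℝ)/σ) = (u ω / c) ^ ((1:ℝ)/σ - 1) * (u ω / c) := by
      rw [← Real.rpow_add_one hx0.ne']
      norm_num
    rw [hsplit]
    have hπ := Real.pi_pos
    field_simp
  -- strict monotonicity on Ioc A B
  have mono : StrictMonoOn N (Ioc A B) := by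
    apply strictMonoOn_of_deriv_pos (convex_Ioc A B)
    · intro x hx
      exact (hderiv x hx.1).continuousAt.continuousWithinAt
    · intro x hx
      rw [interior_Ioc] at hx
      rw [(hderiv x hx.1).deriv]
      have hx0 : 0 < x := lt_trans hA hx.1
      have hu0 : 0 < u x := huA ▸ humono A x hA hx.1
      have huB' : u x < 1/(2*σ) := huB ▸ humono x B hx0 hx.2
      have h1 : 0 < (u x / c) ^ ((1:ℝ)/σ - 1) := Real.rpow_pos_of_pos (by positivity) _
      have hπ := Real.pi_pos
      have h2 : 0 < 1/(2*σ) - u x := by linarith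
      have h3 : 0 < 4 * Real.pi / c := by positivity
      exact div_pos (mul_pos (mul_pos h1 h3) h2) (by positivity)
  -- strict antitonicity on Ici B
  have anti : StrictAntiOn N (Ici B) := by
    apply strictAntiOn_of_deriv_neg (convex_Ici B)
    · intro x hx
      exact (hderiv x (lt_of_lt_of_le hAB hx)).continuousAt.continuousWithinAt
    · intro x hx
      rw [interior_Ici] at hx
      rw [(hderiv x (lt_trans hAB hx)).deriv]
      have hx0 : 0 < x := lt_trans hA (lt_trans hAB hx)
      have hub : 1/(2*σ) < u x := huB ▸ humono B x hB hx
      have hu0 : 0 < u x := lt_trans (by positivity) hub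
      have h1 : 0 < (u x / c) ^ ((1:ℝ)/σ - 1) := Real.rpow_pos_of_pos (by positivity) _
      have hπ := Real.pi_pos
      have h2 : 1/(2*σ) - u x < 0 := by linarith
      have h3 : 0 < 4 * Real.pi / c := by positivity
      exact div_neg_of_neg_of_pos (mul_neg_of_pos_of_neg (mul_pos h1 h3) h2) (by positivity)
  -- limit at A from the right
  have lim1 : Tendsto N (nhdsWithin A (Ioi A)) (nhds 0) := by
    have hcu : ContinuousAt (fun ω => u ω / c) A := by
      have h1 : ContinuousAt Real.log A := Real.continuousAt_log hA.ne'
      exact (((h1.div_const 2).sub (continuousAt_const)).add continuousAt_const).div_const c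
    have hnum : Tendsto (fun ω => (u ω / c) ^ ((1:ℝ)/σ)) (nhdsWithin A (Ioi A)) (nhds 0) := by
      have h0 : Tendsto (fun ω => u ω / c) (nhdsWithin A (Ioi A)) (nhds 0) := by
        have := hcu.tendsto
        rw [huA, zero_div] at this
        exact tendsto_nhdsWithin_of_tendsto_nhds this
      have hrp : ContinuousAt (fun x : ℝ => x ^ ((1:ℝ)/σ)) 0 :=
        Real.continuousAt_rpow_const 0 _ (Or.inr (by positivity))
      have := hrp.tendsto.comp h0
      rwa [Real.zero_rpow (by positivity)] at this
    have hden : Tendsto (fun ω : ℝ => 4*Real.pi*ω) (nhdsWithin A (Ioi A)) (nhds (4*Real.pi*A)) :=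
      tendsto_nhdsWithin_of_tendsto_nhds ((continuousAt_const.mul continuousAt_id).tendsto)
    have := hnum.div hden (by positivity)
    rwa [zero_div] at this
  -- limit at infinity
  have lim2 : Tendsto N atTop (nhds 0) := by
    have key : Tendsto (fun s : ℝ => s ^ ((1:ℝ)/σ) * Real.exp (-(2*c) * s)) atTop (nhds 0) :=
      tendsto_rpow_mul_exp_neg_mul_atTop_nhds_zero _ _ (by positivity)
    have hcomp : Tendsto (fun ω => u ω / c) atTop atTop := by
      apply Tendsto.atTop_div_const hc
      apply tendsto_atTop_add_const_right
      apply tendsto_atTop_add_const_right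
      exact Real.tendsto_log_atTop.atTop_div_const two_pos
    have hmain := (key.comp hcomp).const_mul (Real.exp (2*γ) / (16*Real.pi))
    rw [mul_zero] at hmain
    apply hmain.congr'
    filter_upwards [eventually_gt_atTop A] with ω hω
    have hω0 : 0 < ω := lt_trans hA hω
    have e1 : -(2*c) * (u ω / c) = -Real.log ω + Real.log 4 + (-2*γ) := by
      simp only [hudef]
      rw [hlog4]
      field_simp
      ring
    have e2 : Real.exp (-(2*c) * (u ω / c)) = ω⁻¹ * 4 * Real.exp (-2*γ) := by
      rw [e1, Real.exp_add, Real.exp_add, Real.exp_neg, Real.exp_log hω0,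
        Real.exp_log (by norm_num : (0:ℝ) < 4)]
    have e3 : Real.exp (2*γ) * Real.exp (-2*γ) = 1 := by
      rw [← Real.exp_add]; norm_num
    show Real.exp (2*γ) / (16*Real.pi) * ((u ω / c) ^ ((1:ℝ)/σ) * Real.exp (-(2*c) * (u ω / c)))
        = N ω
    rw [e2, hNdef]
    simp only
    rw [show (-2*γ : ℝ) = -(2*γ) by ring, Real.exp_neg]
    have hπ := Real.pi_pos
    have := Real.exp_ne_zero (2*γ)
    field_simp
    ring
  refine ⟨mono.congr fun x hx => (hMN x hx.1).symm,
    anti.congr fun x hx => (hMN x (lt_of_lt_of_le hAB hx)).symm,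
    lim1.congr' ?_, lim2.congr' ?_⟩
  · filter_upwards [self_mem_nhdsWithin] with x hx
    exact (hMN x hx).symm
  · filter_upwards [eventually_gt_atTop A] with x hx
    exact (hMN x hx).symm
end
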